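/- Let f : M → M be a C¹ map of a compact Riemannian manifold M with Lebesgue (volume) measure Leb, eventually volume expanding with constant λ > 0, and let h(x) = min{n > 0 : |det Df^n(x)| ≥ e^{λn}}, Γ_n = {x : h(x) ≥ n}. If there exist constants C, α > 0 such that Leb(Γ_n) ≤ C·e^{−αn} for every n ≥ 1, then there exists β > 0 such that for Lebesgue almost every x ∈ M there is C_x > 0 with |det Df^n(y)| > C_x · e^{βn} for every n ≥ 1 and every y ∈ f^{−n}(x). -/

import Mathlib

open MeasureTheory Set Filter Function Real ENNReal

/-- `|det Df^n(x)|`: the absolute value of the Jacobian determinant of the `n`-th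
iterate of `f` at `x`. -/
noncomputable def absDetIter {d : ℕ}
    (f : EuclideanSpace ℝ (Fin d) → EuclideanSpace ℝ (Fin d)) (n : ℕ)
    (x : EuclideanSpace ℝ (Fin d)) : ℝ :=
  |(fderiv ℝ (f^[n]) x).det|

/-- `h(x) = min {n > 0 : |det Df^n(x)| ≥ e^{λ n}}`, with value `∞` if no such `n` exists. -/
noncomputable def firstExpTime {d : ℕ}
    (f : EuclideanSpace ℝ (Fin d) → EuclideanSpace ℝ (Fin d)) (lam : ℝ)
    (x : EuclideanSpace ℝ (Fin d)) : ℕ∞ :=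
  sInf {N : ℕ∞ | ∃ m : ℕ, (m : ℕ∞) = N ∧ 0 < m ∧ Real.exp (lam * m) ≤ absDetIter f m x}

/-- `Γ_n = {x ∈ M : h(x) ≥ n}`. -/
noncomputable def GammaSet {d : ℕ} (M : Set (EuclideanSpace ℝ (Fin d)))
    (f : EuclideanSpace ℝ (Fin d) → EuclideanSpace ℝ (Fin d)) (lam : ℝ) (n : ℕ) :
    Set (EuclideanSpace ℝ (Fin d)) :=
  {x ∈ M | (n : ℕ∞) ≤ firstExpTime f lam x}

section aux
variable {d : ℕ} {f : EuclideanSpace ℝ (Fin d) → EuclideanSpace ℝ (Fin d)}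

lemma contDiff_iterate (hf : ContDiff ℝ 1 f) (n : ℕ) : ContDiff ℝ 1 (f^[n]) := by
  induction n with
  | zero => simpa using contDiff_id
  | succ n ih => rw [Function.iterate_succ']; exact hf.comp ih

lemma absDetIter_zero (x : EuclideanSpace ℝ (Fin d)) : absDetIter f 0 x = 1 := by
  simp [absDetIter, Function.iterate_zero, fderiv_id, ContinuousLinearMap.det,
    ContinuousLinearMap.coe_id, LinearMap.det_id]

lemma absDetIter_nonneg (n : ℕ) (x : EuclideanSpace ℝ (Fin d)) : 0 ≤ absDetIter f n x :=
  abs_nonneg _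

lemma absDetIter_add (hf : ContDiff ℝ 1 f) (m t : ℕ) (y : EuclideanSpace ℝ (Fin d)) :
    absDetIter f (m + t) y = absDetIter f m (f^[t] y) * absDetIter f t y := by
  have h1 : DifferentiableAt ℝ (f^[t]) y :=
    ((contDiff_iterate hf t).differentiable one_ne_zero).differentiableAt
  have h2 : DifferentiableAt ℝ (f^[m]) (f^[t] y) :=
    ((contDiff_iterate hf m).differentiable one_ne_zero).differentiableAt
  unfold absDetIter
  rw [Function.iterate_add f m t, fderiv_comp y h2 h1]
  simp [ContinuousLinearMap.det, ContinuousLinearMap.coe_comp, LinearMap.det_comp, abs_mul]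

lemma continuous_absDetIter (hf : ContDiff ℝ 1 f) (n : ℕ) :
    Continuous (absDetIter f n) :=
  continuous_abs.comp (ContinuousLinearMap.continuous_det.comp
    ((contDiff_iterate hf n).continuous_fderiv one_ne_zero))

/-- The set of points whose first `m-1` iterated Jacobians are subexponential and whose
`m`-th iterated Jacobian is at most `e^{bn - λ(n-m)}`. -/
def badS {d : ℕ} (M : Set (EuclideanSpace ℝ (Fin d)))
    (f : EuclideanSpace ℝ (Fin d) → EuclideanSpace ℝ (Fin d)) (lam b : ℝ) (n m : ℕ) :
    Set (EuclideanSpace ℝ (Fin d)) :=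
  M ∩ ((⋂ s ∈ Set.Ico 1 m, {z | absDetIter f s z < Real.exp (lam * s)}) ∩
    {z | absDetIter f m z ≤ Real.exp (b * n - lam * ((n : ℝ) - m))})

/-- The set of points having some `n`-th preimage with `n`-step Jacobian at most `e^{bn}`. -/
def badD {d : ℕ} (M : Set (EuclideanSpace ℝ (Fin d)))
    (f : EuclideanSpace ℝ (Fin d) → EuclideanSpace ℝ (Fin d)) (lam b : ℝ) (n : ℕ) :
    Set (EuclideanSpace ℝ (Fin d)) :=
  ⋃ m ∈ Finset.Icc 1 n, f^[m] '' (badS M f lam b n m)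

lemma measurableSet_badS {M : Set (EuclideanSpace ℝ (Fin d))} (hM : IsCompact M)
    (hf : ContDiff ℝ 1 f) (lam b : ℝ) (n m : ℕ) : MeasurableSet (badS M f lam b n m) := by
  refine hM.isClosed.measurableSet.inter (MeasurableSet.inter ?_ ?_)
  · exact MeasurableSet.biInter (Set.to_countable _) fun s _ =>
      (isOpen_lt (continuous_absDetIter hf s) continuous_const).measurableSet
  · exact (isClosed_le (continuous_absDetIter hf m) continuous_const).measurableSet

lemma badS_subset_Gamma {M : Set (EuclideanSpace ℝ (Fin d))} (lam b : ℝ) (n m : ℕ) :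
    badS M f lam b n m ⊆ GammaSet M f lam m := by
  rintro z ⟨hzM, hlt, -⟩
  refine ⟨hzM, le_sInf ?_⟩
  rintro N ⟨s, rfl, hs, hle⟩
  by_contra hcon
  push_neg at hcon
  have hsm : s < m := by exact_mod_cast hcon
  simp only [Set.mem_iInter, Set.mem_setOf_eq, Set.mem_Ico] at hlt
  exact absurd hle (not_le.2 (hlt s ⟨hs, hsm⟩))

lemma vol_image_le (hf : ContDiff ℝ 1 f) {s : Set (EuclideanSpace ℝ (Fin d))}
    (hs : MeasurableSet s) {m : ℕ} {c : ℝ} (hc : ∀ z ∈ s, absDetIter f m z ≤ c) :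
    volume (f^[m] '' s) ≤ ENNReal.ofReal c * volume s := by
  calc volume (f^[m] '' s)
      ≤ ∫⁻ z in s, ENNReal.ofReal |(fderiv ℝ (f^[m]) z).det| ∂volume :=
        addHaar_image_le_lintegral_abs_det_fderiv volume hs
          (fun z _ => (((contDiff_iterate hf m).differentiable one_ne_zero)
            z).hasFDerivAt.hasFDerivWithinAt)
    _ ≤ ∫⁻ _ in s, ENNReal.ofReal c ∂volume :=
        setLIntegral_mono measurable_const (fun z hz => ENNReal.ofReal_le_ofReal (hc z hz))
    _ = ENNReal.ofReal c * volume s := setLIntegral_const s _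

lemma mem_badD {M : Set (EuclideanSpace ℝ (Fin d))} (hf : ContDiff ℝ 1 f)
    (hfM : MapsTo f M M) {lam b : ℝ} (hblam : b < lam) {n : ℕ} (hn : 1 ≤ n)
    {x y : EuclideanSpace ℝ (Fin d)} (hy : y ∈ M) (hxy : f^[n] y = x)
    (hdet : absDetIter f n y ≤ Real.exp (b * n)) : x ∈ badD M f lam b n := by
  classical
  set P : ℕ → Prop := fun t => Real.exp (lam * t) ≤ absDetIter f t y with hP
  have hP0 : P 0 := by simp [hP, absDetIter_zero]
  set t := Nat.findGreatest P n with ht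
  have htn : t ≤ n := Nat.findGreatest_le n
  have hPt : P t := Nat.findGreatest_spec (Nat.zero_le n) hP0
  have htne : t ≠ n := by
    intro h
    have h1 : Real.exp (lam * n) ≤ Real.exp (b * n) := by
      refine le_trans ?_ hdet
      simpa [h] using hPt
    have h2 : lam * n ≤ b * n := Real.exp_le_exp.1 h1
    have hn0 : (0:ℝ) < n := by exact_mod_cast hn
    nlinarith
  have htltn : t < n := lt_of_le_of_ne htn htne
  set m := n - t with hm
  have hm1 : 1 ≤ m := by omega
  have hn_eq : m + t = n := by omega
  have hzM : f^[t] y ∈ M := (hfM.iterate t) hy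
  have hprod : absDetIter f n y = absDetIter f m (f^[t] y) * absDetIter f t y := by
    have := absDetIter_add hf m t y
    rwa [hn_eq] at this
  have hzS : f^[t] y ∈ badS M f lam b n m := by
    refine ⟨hzM, ?_, ?_⟩
    · simp only [Set.mem_iInter, Set.mem_setOf_eq, Set.mem_Ico]
      rintro s ⟨hs1, hsm⟩
      by_contra hcon
      push_neg at hcon
      have hPst : P (s + t) := by
        show Real.exp (lam * ((s + t : ℕ) : ℝ)) ≤ absDetIter f (s + t) y
        calc Real.exp (lam * ((s + t : ℕ) : ℝ))
            = Real.exp (lam * s) * Real.exp (lam * t) := by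
              rw [← Real.exp_add]; push_cast; ring_nf
          _ ≤ absDetIter f s (f^[t] y) * absDetIter f t y :=
              mul_le_mul hcon hPt (Real.exp_pos _).le (absDetIter_nonneg _ _)
          _ = absDetIter f (s + t) y := (absDetIter_add hf s t y).symm
      have hgt : t < s + t := by omega
      have hle' : s + t ≤ n := by omega
      exact Nat.findGreatest_is_greatest hgt hle' hPst
    · simp only [Set.mem_setOf_eq]
      have hnm : (n : ℝ) - m = t := by
        have : (n : ℝ) = (m : ℝ) + t := by exact_mod_cast hn_eq.symm
        linarith
      rw [hnm, Real.exp_sub, le_div_iff₀ (Real.exp_pos _)]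
      calc absDetIter f m (f^[t] y) * Real.exp (lam * t)
          ≤ absDetIter f m (f^[t] y) * absDetIter f t y :=
            mul_le_mul_of_nonneg_left hPt (absDetIter_nonneg _ _)
        _ = absDetIter f n y := hprod.symm
        _ ≤ Real.exp (b * n) := hdet
  refine Set.mem_iUnion₂.2 ⟨m, Finset.mem_Icc.2 ⟨hm1, by omega⟩, ⟨f^[t] y, hzS, ?_⟩⟩
  rw [← Function.iterate_add_apply, hn_eq, hxy]

lemma vol_badD {M : Set (EuclideanSpace ℝ (Fin d))} (hM : IsCompact M)
    (hf : ContDiff ℝ 1 f) {lam b C α γ : ℝ} (hC : 0 < C) (hγlam : γ ≤ lam) (hγα : γ ≤ α)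
    (hGamma : ∀ n : ℕ, 1 ≤ n →
      volume (GammaSet M f lam n) ≤ ENNReal.ofReal (C * Real.exp (-α * n)))
    (n : ℕ) :
    volume (badD M f lam b n) ≤ (n : ℝ≥0∞) * ENNReal.ofReal (C * Real.exp ((b - γ) * n)) := by
  calc volume (badD M f lam b n)
      ≤ ∑ m ∈ Finset.Icc 1 n, volume (f^[m] '' (badS M f lam b n m)) :=
        measure_biUnion_finset_le _ _
    _ ≤ ∑ _m ∈ Finset.Icc 1 n, ENNReal.ofReal (C * Real.exp ((b - γ) * n)) := by
        refine Finset.sum_le_sum fun m hm => ?_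
        obtain ⟨hm1, hmn⟩ := Finset.mem_Icc.1 hm
        have h1 : volume (f^[m] '' (badS M f lam b n m))
            ≤ ENNReal.ofReal (Real.exp (b * n - lam * ((n : ℝ) - m)))
              * volume (badS M f lam b n m) :=
          vol_image_le hf (measurableSet_badS hM hf lam b n m) (fun z hz => hz.2.2)
        have h2 : volume (badS M f lam b n m) ≤ ENNReal.ofReal (C * Real.exp (-α * m)) :=
          le_trans (measure_mono (badS_subset_Gamma lam b n m)) (hGamma m hm1)
        refine le_trans (le_trans h1 (mul_le_mul_right h2 _)) ?_
        rw [← ENNReal.ofReal_mul (Real.exp_pos _).le]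
        refine ENNReal.ofReal_le_ofReal ?_
        have heq : Real.exp (b * n - lam * ((n : ℝ) - m)) * (C * Real.exp (-α * m))
            = C * Real.exp (b * n - lam * ((n : ℝ) - m) + -α * m) := by
          rw [Real.exp_add]; ring
        rw [heq]
        refine mul_le_mul_of_nonneg_left (Real.exp_le_exp.2 ?_) hC.le
        have hmn' : (m : ℝ) ≤ n := by exact_mod_cast hmn
        have hm0 : (0:ℝ) ≤ m := Nat.cast_nonneg m
        nlinarith
    _ = (n : ℝ≥0∞) * ENNReal.ofReal (C * Real.exp ((b - γ) * n)) := by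
        rw [Finset.sum_const, Nat.card_Icc]
        simp [nsmul_eq_mul]

end aux

/-- Exponential case: if `Leb (Γ_n) ≤ C e^{-α n}` then one gets backward contraction at an
exponential rate `e^{β n}`. -/
theorem backward_contraction_exponential {d : ℕ}
    (M : Set (EuclideanSpace ℝ (Fin d))) (hM : IsCompact M)
    (f : EuclideanSpace ℝ (Fin d) → EuclideanSpace ℝ (Fin d))
    (hf : ContDiff ℝ 1 f) (hfM : MapsTo f M M)
    (lam : ℝ) (hlam : 0 < lam)
    (h_expanding : ∀ᵐ x ∂(volume.restrict M),
      ∃ n : ℕ, 1 ≤ n ∧ lam < (1 / n) * Real.log (absDetIter f n x))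
    (C α : ℝ) (hC : 0 < C) (hα : 0 < α)
    (hGamma : ∀ n : ℕ, 1 ≤ n →
      volume (GammaSet M f lam n) ≤ ENNReal.ofReal (C * Real.exp (-α * n))) :
    ∃ β : ℝ, 0 < β ∧ ∀ᵐ x ∂(volume.restrict M), ∃ Cx : ℝ, 0 < Cx ∧
      ∀ n : ℕ, 1 ≤ n → ∀ y ∈ M, f^[n] y = x →
        Cx * Real.exp (β * n) < absDetIter f n y := by
  classical
  set γ := min lam α with hγdef
  have hγ : 0 < γ := lt_min hlam hα
  set b := γ / 2 with hbdef
  have hb : 0 < b := by positivity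
  have hblam : b < lam := lt_of_lt_of_le (half_lt_self hγ) (min_le_left _ _)
  refine ⟨b, hb, ?_⟩
  -- the union of images of zero-Jacobian sets is null
  have hZmeas : ∀ n : ℕ, MeasurableSet (M ∩ {y | absDetIter f n y = 0}) := fun n =>
    hM.isClosed.measurableSet.inter
      ((isClosed_eq (continuous_absDetIter hf n) continuous_const).measurableSet)
  have hZ0 : volume (⋃ n : ℕ, f^[n] '' (M ∩ {y | absDetIter f n y = 0})) = 0 := by
    refine measure_iUnion_null fun n => le_antisymm ?_ (zero_le)
    refine le_trans (vol_image_le hf (hZmeas n) (fun z hz => le_of_eq hz.2)) ?_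
    simp
  have hZae : ∀ᵐ x ∂(volume : Measure (EuclideanSpace ℝ (Fin d))),
      x ∉ ⋃ n : ℕ, f^[n] '' (M ∩ {y | absDetIter f n y = 0}) :=
    measure_eq_zero_iff_ae_notMem.1 hZ0
  -- the bad sets have summable measure
  have hterm : ∀ n : ℕ, volume (badD M f lam b n)
      ≤ ENNReal.ofReal (C * (4 / γ)) * (ENNReal.ofReal (Real.exp (-(γ/4))))^n := by
    intro n
    refine le_trans (vol_badD hM hf hC (min_le_left _ _) (min_le_right _ _) hGamma n) ?_
    rw [← ENNReal.ofReal_natCast n, ← ENNReal.ofReal_mul (Nat.cast_nonneg n),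
      ← ENNReal.ofReal_pow (Real.exp_pos _).le, ← ENNReal.ofReal_mul (by positivity)]
    refine ENNReal.ofReal_le_ofReal ?_
    have hexps : γ/4 * (n:ℝ) + (b - γ) * n = (n:ℝ) * -(γ/4) := by rw [hbdef]; ring
    have hn4 : (n:ℝ) ≤ 4/γ * Real.exp (γ/4 * n) := by
      have h := Real.add_one_le_exp (γ/4 * n)
      have h2 : γ/4 * (n:ℝ) ≤ Real.exp (γ/4 * n) := by linarith
      calc (n:ℝ) = 4/γ * (γ/4 * n) := by field_simp
        _ ≤ 4/γ * Real.exp (γ/4 * n) := mul_le_mul_of_nonneg_left h2 (by positivity)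
    rw [← Real.exp_nat_mul]
    calc (n:ℝ) * (C * Real.exp ((b - γ) * n))
        ≤ (4/γ * Real.exp (γ/4 * n)) * (C * Real.exp ((b - γ) * n)) :=
          mul_le_mul_of_nonneg_right hn4 (by positivity)
      _ = C * (4/γ) * (Real.exp (γ/4 * n) * Real.exp ((b - γ) * n)) := by ring
      _ = C * (4/γ) * Real.exp ((n:ℝ) * -(γ/4)) := by rw [← Real.exp_add, hexps]
  have hr1 : ENNReal.ofReal (Real.exp (-(γ/4))) < 1 := by
    rw [ENNReal.ofReal_lt_one, Real.exp_lt_one_iff]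
    linarith
  have hsum : (∑' n : ℕ, volume (badD M f lam b n)) ≠ ⊤ := by
    refine ne_top_of_le_ne_top ?_ (ENNReal.tsum_le_tsum hterm)
    rw [ENNReal.tsum_mul_left, ENNReal.tsum_geometric]
    refine ENNReal.mul_ne_top ENNReal.ofReal_ne_top (ENNReal.inv_ne_top.2 ?_)
    intro h
    exact absurd (tsub_eq_zero_iff_le.1 h) (not_le.2 hr1)
  have hDae : ∀ᵐ x ∂(volume : Measure (EuclideanSpace ℝ (Fin d))),
      ∀ᶠ n in atTop, x ∉ badD M f lam b n :=
    MeasureTheory.ae_eventually_notMem hsum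
  refine ae_restrict_of_ae ?_
  filter_upwards [hDae, hZae] with x hx1 hx2
  obtain ⟨N, hN⟩ := eventually_atTop.1 hx1
  have hpos : ∀ n : ℕ, ∀ y ∈ M, f^[n] y = x → 0 < absDetIter f n y := by
    intro n y hy hxy
    rcases (absDetIter_nonneg n y (f := f)).lt_or_eq with h | h
    · exact h
    · refine absurd (Set.mem_iUnion.2 ⟨n, ?_⟩) hx2
      exact ⟨y, ⟨hy, h.symm⟩, hxy⟩
  have hcn : ∀ n : ℕ, ∃ c : ℝ, 0 < c ∧ ∀ y ∈ M, f^[n] y = x → c < absDetIter f n y := by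
    intro n
    by_cases hK : (M ∩ f^[n] ⁻¹' {x}).Nonempty
    · have hKc : IsCompact (M ∩ f^[n] ⁻¹' {x}) :=
        hM.inter_right (isClosed_singleton.preimage (contDiff_iterate hf n).continuous)
      obtain ⟨y₀, hy₀, hmin⟩ := hKc.exists_isMinOn hK (continuous_absDetIter hf n).continuousOn
      have h0 : 0 < absDetIter f n y₀ := hpos n y₀ hy₀.1 (by simpa using hy₀.2)
      refine ⟨absDetIter f n y₀ / 2, half_pos h0, fun y hy hxy => ?_⟩
      have hle : absDetIter f n y₀ ≤ absDetIter f n y := hmin (Set.mem_inter hy (by simp [hxy]))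
      linarith
    · exact ⟨1, one_pos, fun y hy hxy => (hK ⟨y, Set.mem_inter hy (by simp [hxy])⟩).elim⟩
  choose c hc0 hclt using hcn
  set Cx := min (1/2 : ℝ) ((Finset.range (N+1)).inf' ⟨0, Finset.mem_range.2 (Nat.succ_pos N)⟩
    (fun k => c k * Real.exp (-(b * k)))) with hCxdef
  refine ⟨Cx, ?_, ?_⟩
  · refine lt_min (by norm_num) ?_
    refine (Finset.lt_inf'_iff _).2 ?_
    exact fun k _ => mul_pos (hc0 k) (Real.exp_pos _)
  · intro n hn y hy hxy
    by_cases hcase : N ≤ n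
    · have hnot : x ∉ badD M f lam b n := hN n hcase
      have hbig : Real.exp (b * n) < absDetIter f n y := by
        by_contra hcon
        push_neg at hcon
        exact hnot (mem_badD hf hfM hblam hn hy hxy hcon)
      have hCx2 : Cx ≤ 1/2 := min_le_left _ _
      have h2 : Cx * Real.exp (b * n) ≤ (1/2) * Real.exp (b * n) :=
        mul_le_mul_of_nonneg_right hCx2 (Real.exp_pos _).le
      have h3 : (1/2 : ℝ) * Real.exp (b * n) < Real.exp (b * n) := by
        nlinarith [Real.exp_pos (b * (n:ℝ))]
      linarith
    · have hk : n ∈ Finset.range (N+1) := Finset.mem_range.2 (by omega)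
      have h1 : Cx ≤ c n * Real.exp (-(b * n)) :=
        le_trans (min_le_right _ _) (Finset.inf'_le _ hk)
      have h2 : Cx * Real.exp (b * n) ≤ c n := by
        calc Cx * Real.exp (b * n) ≤ (c n * Real.exp (-(b * n))) * Real.exp (b * n) :=
            mul_le_mul_of_nonneg_right h1 (Real.exp_pos _).le
          _ = c n := by rw [mul_assoc, ← Real.exp_add]; simp
      exact lt_of_le_of_lt h2 (hclt n y hy hxy)
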